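/- Let (X_i) be a finite sequence of real numbers, S_j = X_1 + ... + X_j, M_n = max_{1≤i≤n} |S_i|, M_n^+ = max(0, S_1, ..., S_n), M_n^- = max(0, -S_1, ..., -S_n), and D_k = (M_k^+ - M_{k-1}^+) - (M_k^- - M_{k-1}^-). Then (M_n)^2 ≤ 4(S_n)^2 - 4 ∑_{k=1}^{n-1} D_k (S_n - S_k). -/
import Mathlib


open Finset

lemma aux_sup_range_succ (f : ℕ → ℝ) (m : ℕ) :
    (Finset.range (m + 1 + 1)).sup' ⟨0, by simp⟩ f
      = max (f (m + 1)) ((Finset.range (m + 1)).sup' ⟨0, by simp⟩ f) := by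
  apply le_antisymm
  · apply Finset.sup'_le
    intro i hi
    rcases Nat.lt_succ_iff_lt_or_eq.1 (Finset.mem_range.1 hi) with h | h
    · exact le_max_of_le_right (Finset.le_sup' f (Finset.mem_range.2 h))
    · subst h; exact le_max_left _ _
  · apply max_le
    · exact Finset.le_sup' f (Finset.mem_range.2 (by omega))
    · apply Finset.sup'_le
      intro i hi
      exact Finset.le_sup' f (Finset.mem_range.2 (by simp at hi; omega))

/-- Deterministic maximal inequality (Peligrad–Utev / Dedecker–Rio):
for real numbers `X 1, ..., X n` with partial sums `S`, maxima `M`, `Mp`, `Mm`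
and increments `D`, one has `(M n)^2 ≤ 4 (S n)^2 - 4 ∑_{k=1}^{n-1} D k (S n - S k)`. -/
theorem stmt0 (n : ℕ) (hn : 1 ≤ n) (X S Mp Mm M D : ℕ → ℝ)
    (hS : ∀ j, S j = ∑ i ∈ Finset.Icc 1 j, X i)
    (hMp : ∀ m, Mp m = (Finset.range (m + 1)).sup' ⟨0, by simp⟩ (fun i => S i))
    (hMm : ∀ m, Mm m = (Finset.range (m + 1)).sup' ⟨0, by simp⟩ (fun i => -S i))
    (hM : ∀ m, M m = (Finset.range (m + 1)).sup' ⟨0, by simp⟩ (fun i => |S i|))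
    (hD : ∀ k, 1 ≤ k → D k = (Mp k - Mp (k - 1)) - (Mm k - Mm (k - 1))) :
    (M n) ^ 2 ≤ 4 * (S n) ^ 2 - 4 * ∑ k ∈ Finset.Icc 1 (n - 1), D k * (S n - S k) := by
  have hS0 : S 0 = 0 := by simp [hS]
  have hMp0 : Mp 0 = 0 := by rw [hMp 0]; simp [hS0]
  have hMm0 : Mm 0 = 0 := by rw [hMm 0]; simp [hS0]
  have hM0 : M 0 = 0 := by rw [hM 0]; simp [hS0]
  have hMpS : ∀ m, Mp (m + 1) = max (S (m + 1)) (Mp m) := by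
    intro m
    rw [hMp (m + 1), hMp m]
    exact aux_sup_range_succ _ m
  have hMmS : ∀ m, Mm (m + 1) = max (-S (m + 1)) (Mm m) := by
    intro m
    rw [hMm (m + 1), hMm m]
    exact aux_sup_range_succ _ m
  have hMS : ∀ m, M (m + 1) = max (|S (m + 1)|) (M m) := by
    intro m
    rw [hM (m + 1), hM m]
    exact aux_sup_range_succ _ m
  have hMeq : ∀ m, M m = max (Mp m) (Mm m) := by
    intro m
    induction m with
    | zero => rw [hM0, hMp0, hMm0]; simp
    | succ j ih =>
      rw [hMS j, ih, hMpS j, hMmS j, abs_eq_max_neg]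
      exact max_max_max_comm _ _ _ _
  have hMp_mono : ∀ m, Mp m ≤ Mp (m + 1) := fun m => by
    rw [hMpS m]; exact le_max_right _ _
  have hMm_mono : ∀ m, Mm m ≤ Mm (m + 1) := fun m => by
    rw [hMmS m]; exact le_max_right _ _
  have hMp_nonneg : ∀ m, 0 ≤ Mp m := by
    intro m
    induction m with
    | zero => rw [hMp0]
    | succ j ih => exact ih.trans (hMp_mono j)
  have hMm_nonneg : ∀ m, 0 ≤ Mm m := by
    intro m
    induction m with
    | zero => rw [hMm0]
    | succ j ih => exact ih.trans (hMm_mono j)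
  have hSleMp : ∀ m, S m ≤ Mp m := by
    intro m
    cases m with
    | zero => rw [hS0, hMp0]
    | succ j => rw [hMpS j]; exact le_max_left _ _
  have hSleMm : ∀ m, -S m ≤ Mm m := by
    intro m
    cases m with
    | zero => rw [hS0, hMm0]; simp
    | succ j => rw [hMmS j]; exact le_max_left _ _
  have keyP : ∀ m, (Mp (m + 1) - Mp m) * S (m + 1) = (Mp (m + 1) - Mp m) * Mp (m + 1) := by
    intro m
    rcases le_or_gt (S (m + 1)) (Mp m) with h | h
    · rw [hMpS m, max_eq_right h]; ring
    · rw [hMpS m, max_eq_left h.le]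
  have keyM : ∀ m, (Mm (m + 1) - Mm m) * (-S (m + 1)) = (Mm (m + 1) - Mm m) * Mm (m + 1) := by
    intro m
    rcases le_or_gt (-S (m + 1)) (Mm m) with h | h
    · rw [hMmS m, max_eq_right h]; ring
    · rw [hMmS m, max_eq_left h.le]
  have hsumD : ∀ m, ∑ k ∈ Finset.Icc 1 m, D k = Mp m - Mm m := by
    intro m
    induction m with
    | zero => simp [hMp0, hMm0]
    | succ j ih =>
      rw [Finset.sum_Icc_succ_top (Nat.le_add_left 1 j), ih, hD (j + 1) (by omega)]
      simp only [Nat.add_sub_cancel]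
      ring
  have hsumDS : ∀ m, (Mp m) ^ 2 + (Mm m) ^ 2 ≤ 2 * ∑ k ∈ Finset.Icc 1 m, D k * S k := by
    intro m
    induction m with
    | zero => simp [hMp0, hMm0]
    | succ j ih =>
      rw [Finset.sum_Icc_succ_top (Nat.le_add_left 1 j), hD (j + 1) (by omega)]
      simp only [Nat.add_sub_cancel]
      have h1 := keyP j
      have h2 := keyM j
      nlinarith [sq_nonneg (Mp (j + 1) - Mp j), sq_nonneg (Mm (j + 1) - Mm j)]
  obtain ⟨n', rfl⟩ : ∃ n', n = n' + 1 := ⟨n - 1, by omega⟩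
  have hidx : (n' + 1) - 1 = n' := rfl
  rw [hidx]
  have hsplit : ∑ k ∈ Finset.Icc 1 n', D k * (S (n' + 1) - S k)
      = ∑ k ∈ Finset.Icc 1 (n' + 1), D k * (S (n' + 1) - S k) := by
    rw [Finset.sum_Icc_succ_top (Nat.le_add_left 1 n')]; simp
  have hexp : ∑ k ∈ Finset.Icc 1 (n' + 1), D k * (S (n' + 1) - S k)
      = S (n' + 1) * (∑ k ∈ Finset.Icc 1 (n' + 1), D k)
        - ∑ k ∈ Finset.Icc 1 (n' + 1), D k * S k := by
    rw [Finset.mul_sum, ← Finset.sum_sub_distrib]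
    exact Finset.sum_congr rfl (fun k _ => by ring)
  rw [hsplit, hexp, hsumD (n' + 1), hMeq (n' + 1)]
  set a := Mp (n' + 1)
  set b := Mm (n' + 1)
  set s := S (n' + 1)
  have hT := hsumDS (n' + 1)
  have h1 : s ≤ a := hSleMp (n' + 1)
  have h2 : -s ≤ b := hSleMm (n' + 1)
  have ha : (0:ℝ) ≤ a := hMp_nonneg (n' + 1)
  have hb : (0:ℝ) ≤ b := hMm_nonneg (n' + 1)
  rcases max_cases a b with ⟨hmax, _⟩ | ⟨hmax, _⟩ <;> rw [hmax] <;>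
      rcases le_total s 0 with hs | hs
  · nlinarith [sq_nonneg (b + s), mul_nonneg (neg_nonneg.2 hs) ha, sq_nonneg s, sq_nonneg a]
  · nlinarith [sq_nonneg (a - 2 * s), mul_nonneg hb (by linarith : (0:ℝ) ≤ b + 2 * s)]
  · nlinarith [sq_nonneg (b + 2 * s), mul_nonneg (neg_nonneg.2 hs) ha, sq_nonneg a]
  · nlinarith [sq_nonneg (a - s), mul_nonneg hb hs, sq_nonneg s, sq_nonneg b]
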